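/- The Fourier expansion of δ1 in q = e^{2πiτ} begins δ1(τ) = 1/4 + 6q + 6q^2 + ⋯; precisely, δ1 is a holomorphic function of q on the punctured unit disc extending holomorphically to q = 0, and its Taylor coefficients at q = 0 in degrees 0, 1, 2 are 1/4, 6 and 6 respectively. -/

import Mathlib

open Complex Real

/-- The nome `q = e^{2πiτ}`. -/
noncomputable def qq (τ : ℂ) : ℂ := Complex.exp (2 * π * Complex.I * τ)

/-- The half-nome `q^{1/2} = e^{πiτ}`. -/
noncomputable def qh (τ : ℂ) : ℂ := Complex.exp (π * Complex.I * τ)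

/-- The Jacobi theta constant `θ₁(0,τ) = 2 q^{1/8} ∏_{j≥1} (1-q^j)(1+q^j)^2`. -/
noncomputable def theta1 (τ : ℂ) : ℂ :=
  2 * Complex.exp (π * Complex.I * τ / 4) *
    ∏' j : ℕ, ((1 - qq τ ^ (j + 1)) * (1 + qq τ ^ (j + 1)) ^ 2)

/-- The Jacobi theta constant `θ₂(0,τ) = ∏_{j≥1} (1-q^j)(1-q^{j-1/2})^2`. -/
noncomputable def theta2 (τ : ℂ) : ℂ :=
  ∏' j : ℕ, ((1 - qq τ ^ (j + 1)) * (1 - qh τ ^ (2 * j + 1)) ^ 2)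

/-- The Jacobi theta constant `θ₃(0,τ) = ∏_{j≥1} (1-q^j)(1+q^{j-1/2})^2`. -/
noncomputable def theta3 (τ : ℂ) : ℂ :=
  ∏' j : ℕ, ((1 - qq τ ^ (j + 1)) * (1 + qh τ ^ (2 * j + 1)) ^ 2)

/-- `δ₁(τ) = (θ₂(0,τ)⁴ + θ₃(0,τ)⁴)/8`. -/
noncomputable def delta1 (τ : ℂ) : ℂ := (theta2 τ ^ 4 + theta3 τ ^ 4) / 8

namespace Delta1Aux

open Filter Topology Asymptotics Function

/-- One factor of the theta products, as a function of the half-nome `w`. -/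
noncomputable def term (ε : ℂ) (j : ℕ) (w : ℂ) : ℂ :=
  (1 - w ^ (2 * (j + 1))) * (1 + ε * w ^ (2 * j + 1)) ^ 2

/-- The theta products as functions of the half-nome. -/
noncomputable def P (ε : ℂ) (w : ℂ) : ℂ := ∏' j : ℕ, term ε j w

lemma norm_term_sub_one {ε w : ℂ} (hε : ‖ε‖ ≤ 1) (hw : ‖w‖ ≤ 1) (j : ℕ) :
    ‖term ε j w - 1‖ ≤ 7 * ‖w‖ ^ (2 * j + 1) := by
  set a := w ^ (2 * (j + 1)) with ha'
  set b := ε * w ^ (2 * j + 1) with hb'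
  set t := ‖w‖ ^ (2 * j + 1) with ht'
  have ht0 : 0 ≤ t := pow_nonneg (norm_nonneg w) _
  have ht1 : t ≤ 1 := pow_le_one₀ (norm_nonneg w) hw
  have hb : ‖b‖ ≤ t := by
    rw [hb', norm_mul, norm_pow]
    calc ‖ε‖ * ‖w‖ ^ (2 * j + 1) ≤ 1 * ‖w‖ ^ (2 * j + 1) := by gcongr
      _ = t := one_mul _
  have ha : ‖a‖ ≤ t := by
    rw [ha', norm_pow, ht']
    exact pow_le_pow_of_le_one (norm_nonneg w) hw (by omega)
  have hid : term ε j w - 1 = 2 * b + b ^ 2 - a - 2 * (a * b) - a * b ^ 2 := by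
    rw [term]; ring
  rw [hid]
  have h1 : ‖2 * b + b ^ 2 - a - 2 * (a * b) - a * b ^ 2‖ ≤
      2 * ‖b‖ + ‖b‖ ^ 2 + ‖a‖ + 2 * (‖a‖ * ‖b‖) + ‖a‖ * ‖b‖ ^ 2 := by
    calc ‖2 * b + b ^ 2 - a - 2 * (a * b) - a * b ^ 2‖
        ≤ ‖2 * b + b ^ 2 - a - 2 * (a * b)‖ + ‖a * b ^ 2‖ := norm_sub_le _ _
      _ ≤ (‖2 * b + b ^ 2 - a‖ + ‖2 * (a * b)‖) + ‖a * b ^ 2‖ := by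
          gcongr; exact norm_sub_le _ _
      _ ≤ ((‖2 * b + b ^ 2‖ + ‖a‖) + ‖2 * (a * b)‖) + ‖a * b ^ 2‖ := by
          gcongr; exact norm_sub_le _ _
      _ ≤ (((‖2 * b‖ + ‖b ^ 2‖) + ‖a‖) + ‖2 * (a * b)‖) + ‖a * b ^ 2‖ := by
          gcongr; exact norm_add_le _ _
      _ = 2 * ‖b‖ + ‖b‖ ^ 2 + ‖a‖ + 2 * (‖a‖ * ‖b‖) + ‖a‖ * ‖b‖ ^ 2 := by
          simp [norm_mul, norm_pow]
  refine h1.trans ?_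
  have hbn : 0 ≤ ‖b‖ := norm_nonneg b
  have han : 0 ≤ ‖a‖ := norm_nonneg a
  nlinarith [sq_nonneg (‖b‖ - t)]

lemma one_add_ne_zero {z : ℂ} (hz : ‖z‖ < 1) : 1 + z ≠ 0 := by
  intro h
  have hz1 : z = -1 := by linear_combination h
  rw [hz1] at hz
  simp at hz

lemma term_ne_zero {ε w : ℂ} (hε : ‖ε‖ ≤ 1) (hw : ‖w‖ < 1) (j : ℕ) : term ε j w ≠ 0 := by
  have h1 : ‖(-(w ^ (2 * (j + 1))))‖ < 1 := by
    rw [norm_neg, norm_pow]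
    exact pow_lt_one₀ (norm_nonneg w) hw (by omega)
  have h2 : ‖ε * w ^ (2 * j + 1)‖ < 1 := by
    rw [norm_mul, norm_pow]
    calc ‖ε‖ * ‖w‖ ^ (2 * j + 1) ≤ 1 * ‖w‖ ^ (2 * j + 1) := by gcongr
      _ = ‖w‖ ^ (2 * j + 1) := one_mul _
      _ < 1 := pow_lt_one₀ (norm_nonneg w) hw (by omega)
  have e1 : (1 : ℂ) - w ^ (2 * (j + 1)) = 1 + -(w ^ (2 * (j + 1))) := by ring
  refine mul_ne_zero ?_ (pow_ne_zero 2 (one_add_ne_zero h2))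
  rw [e1]
  exact one_add_ne_zero h1

lemma mem_slitPlane_of_close {z : ℂ} (h : ‖z - 1‖ ≤ 1 / 2) : z ∈ Complex.slitPlane := by
  rw [Complex.mem_slitPlane_iff]
  left
  have h1 : |(z - 1).re| ≤ ‖z - 1‖ := Complex.abs_re_le_norm _
  have h2 : z.re = 1 + (z - 1).re := by simp
  have := abs_le.1 h1
  linarith

lemma norm_log_term_le {ε w : ℂ} (hε : ‖ε‖ ≤ 1) (hw : ‖w‖ ≤ 1) (j : ℕ)
    (hsmall : 7 * ‖w‖ ^ (2 * j + 1) ≤ 1 / 2) :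
    ‖Complex.log (term ε j w)‖ ≤ (21 / 2) * ‖w‖ ^ (2 * j + 1) := by
  have h1 := norm_term_sub_one hε hw j
  have e : term ε j w = 1 + (term ε j w - 1) := by ring
  rw [e]
  refine (Complex.norm_log_one_add_half_le_self (h1.trans hsmall)).trans ?_
  nlinarith [pow_nonneg (norm_nonneg w) (2 * j + 1)]

lemma summable_pow_aux {r : ℝ} (h0 : 0 ≤ r) (hr : r < 1) (c : ℕ) :
    Summable (fun j : ℕ => r ^ (2 * j + c)) := by
  have he : (fun j : ℕ => r ^ (2 * j + c)) = fun j => r ^ c * (r ^ 2) ^ j := by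
    funext j
    rw [← pow_mul, ← pow_add]
    ring_nf
  rw [he]
  exact (summable_geometric_of_lt_one (by positivity) (by nlinarith)).mul_left _

lemma summable_log_term {ε w : ℂ} (hε : ‖ε‖ ≤ 1) (hw : ‖w‖ < 1) (J : ℕ) :
    Summable (fun j : ℕ => Complex.log (term ε (j + J) w)) := by
  have hw0 := norm_nonneg w
  refine Summable.of_norm_bounded_eventually_nat
    (g := fun j => (21 / 2) * ‖w‖ ^ (2 * j + (2 * J + 1))) ((summable_pow_aux hw0 hw _).mul_left _) ?_
  have htend : Tendsto (fun j : ℕ => 7 * ‖w‖ ^ (2 * (j + J) + 1)) atTop (𝓝 0) := by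
    have hb : ∀ j : ℕ, 0 ≤ 7 * ‖w‖ ^ (2 * (j + J) + 1) ∧
        7 * ‖w‖ ^ (2 * (j + J) + 1) ≤ 7 * ‖w‖ ^ j := by
      intro j
      constructor
      · positivity
      · have := pow_le_pow_of_le_one hw0 hw.le (show j ≤ 2 * (j + J) + 1 by omega)
        linarith
    have h7 : Tendsto (fun j : ℕ => 7 * ‖w‖ ^ j) atTop (𝓝 0) := by
      have := (tendsto_pow_atTop_nhds_zero_of_lt_one hw0 hw).const_mul (7 : ℝ)
      simpa using this
    exact squeeze_zero (fun j => (hb j).1) (fun j => (hb j).2) h7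
  filter_upwards [htend.eventually_le_const (by norm_num : (0:ℝ) < 1/2)] with j hj
  have he : 2 * (j + J) + 1 = 2 * j + (2 * J + 1) := by ring
  have := norm_log_term_le hε hw.le (j + J) hj
  rw [he] at this
  exact this

lemma tail_eq_exp {ε w : ℂ} (hε : ‖ε‖ ≤ 1) (hw : ‖w‖ < 1) (J : ℕ) :
    (∏' j : ℕ, term ε (j + J) w) =
      Complex.exp (∑' j : ℕ, Complex.log (term ε (j + J) w)) := by
  have h := Complex.cexp_tsum_eq_tprod (fun j => term_ne_zero hε hw (j + J))
    (summable_log_term hε hw J)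
  exact h.symm

lemma P_split {ε w : ℂ} (hε : ‖ε‖ ≤ 1) (hw : ‖w‖ < 1) (J : ℕ) :
    P ε w = (∏ j ∈ Finset.range J, term ε j w) *
      Complex.exp (∑' j : ℕ, Complex.log (term ε (j + J) w)) := by
  have h0 : P ε w = Complex.exp (∑' j : ℕ, Complex.log (term ε j w)) := by
    have := tail_eq_exp hε hw 0
    simpa [P] using this
  have hsum : Summable (fun j : ℕ => Complex.log (term ε j w)) := by
    simpa using summable_log_term hε hw 0
  have h1 : (∑' j : ℕ, Complex.log (term ε j w)) =
      (∑ j ∈ Finset.range J, Complex.log (term ε j w)) +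
        ∑' j : ℕ, Complex.log (term ε (j + J) w) :=
    (Summable.sum_add_tsum_nat_add J hsum).symm
  rw [h0, h1, Complex.exp_add, Complex.exp_sum]
  congr 1
  exact Finset.prod_congr rfl (fun j _ => Complex.exp_log (term_ne_zero hε hw j))

lemma differentiable_term (ε : ℂ) (j : ℕ) : Differentiable ℂ (term ε j) := by
  unfold term
  exact ((differentiable_const _).sub (differentiable_pow _)).mul
    (((differentiable_const _).add ((differentiable_pow _).const_mul _)).pow 2)

lemma P_differentiableOn {ε : ℂ} (hε : ‖ε‖ ≤ 1) :
    DifferentiableOn ℂ (P ε) (Metric.ball 0 1) := by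
  intro w0 hw0
  apply DifferentiableAt.differentiableWithinAt
  rw [mem_ball_zero_iff] at hw0
  set r : ℝ := (‖w0‖ + 1) / 2 with hrdef
  have hr0 : 0 ≤ r := by positivity
  have hr1 : r < 1 := by
    rw [hrdef]; linarith
  have hw0r : ‖w0‖ < r := by rw [hrdef]; linarith [norm_nonneg w0]
  -- choose J with 7 * r ^ (2J+1) ≤ 1/2
  obtain ⟨J, hJ⟩ : ∃ J : ℕ, 7 * r ^ (2 * J + 1) ≤ 1 / 2 := by
    have h7 : Tendsto (fun n : ℕ => 7 * r ^ n) atTop (𝓝 0) := by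
      have := (tendsto_pow_atTop_nhds_zero_of_lt_one hr0 hr1).const_mul (7 : ℝ)
      simpa using this
    obtain ⟨N, hN⟩ := (h7.eventually_le_const (by norm_num : (0:ℝ) < 1/2)).exists
    refine ⟨N, le_trans ?_ hN⟩
    have := pow_le_pow_of_le_one hr0 hr1.le (show N ≤ 2 * N + 1 by omega)
    linarith
  have hball : ∀ x : ℂ, x ∈ Metric.ball (0:ℂ) r → ‖x‖ < r := by
    intro x hx; rwa [mem_ball_zero_iff] at hx
  -- bound on each log-term on the ball of radius r
  have hsmall : ∀ (j : ℕ) (x : ℂ), x ∈ Metric.ball (0:ℂ) r →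
      7 * ‖x‖ ^ (2 * (j + J) + 1) ≤ 1 / 2 := by
    intro j x hx
    refine le_trans ?_ hJ
    have h1 : ‖x‖ ^ (2 * (j + J) + 1) ≤ r ^ (2 * (j + J) + 1) :=
      pow_le_pow_left₀ (norm_nonneg x) (hball x hx).le _
    have h2 : r ^ (2 * (j + J) + 1) ≤ r ^ (2 * J + 1) :=
      pow_le_pow_of_le_one hr0 hr1.le (by omega)
    nlinarith
  have hdiff_tail : DifferentiableOn ℂ
      (fun w : ℂ => ∑' j : ℕ, Complex.log (term ε (j + J) w)) (Metric.ball 0 r) := by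
    refine differentiableOn_tsum_of_summable_norm
      (u := fun j : ℕ => (21 / 2) * r ^ (2 * j + (2 * J + 1)))
      (((summable_pow_aux hr0 hr1 _).mul_left _)) ?_ Metric.isOpen_ball ?_
    · intro j
      refine DifferentiableOn.clog ((differentiable_term ε (j + J)).differentiableOn) ?_
      intro x hx
      refine mem_slitPlane_of_close ?_
      exact le_trans (norm_term_sub_one hε ((hball x hx).le.trans hr1.le) (j + J))
        (by nlinarith [hsmall j x hx])
    · intro j x hx
      have h1 := norm_log_term_le hε ((hball x hx).le.trans hr1.le) (j + J) (hsmall j x hx)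
      refine h1.trans ?_
      have he : 2 * (j + J) + 1 = 2 * j + (2 * J + 1) := by ring
      rw [he]
      have := pow_le_pow_left₀ (norm_nonneg x) (hball x hx).le (2 * j + (2 * J + 1))
      linarith
  have hdiff : DifferentiableOn ℂ (P ε) (Metric.ball 0 r) := by
    refine DifferentiableOn.congr
      (f := fun w : ℂ => (∏ j ∈ Finset.range J, term ε j w) *
        Complex.exp (∑' j : ℕ, Complex.log (term ε (j + J) w))) ?_ ?_
    · refine DifferentiableOn.mul ?_ hdiff_tail.cexp
      have : Differentiable ℂ (fun w : ℂ => ∏ j ∈ Finset.range J, term ε j w) := by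
        apply Differentiable.fun_finsetProd
        intro j _
        exact differentiable_term ε j
      exact this.differentiableOn
    · intro x hx
      exact P_split hε ((hball x hx).trans hr1) J
  exact hdiff.differentiableAt (Metric.isOpen_ball.mem_nhds (mem_ball_zero_iff.mpr hw0r))

lemma norm_term_le {ε w : ℂ} (hε : ‖ε‖ ≤ 1) (hw : ‖w‖ ≤ 1) (j : ℕ) : ‖term ε j w‖ ≤ 8 := by
  rw [term, norm_mul, norm_pow]
  have h1 : ‖(1:ℂ) - w ^ (2 * (j + 1))‖ ≤ 2 := by
    refine (norm_sub_le _ _).trans ?_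
    rw [norm_one, norm_pow]
    have := pow_le_one₀ (norm_nonneg w) hw (n := 2 * (j + 1))
    linarith
  have h2 : ‖(1:ℂ) + ε * w ^ (2 * j + 1)‖ ≤ 2 := by
    refine (norm_add_le _ _).trans ?_
    rw [norm_one, norm_mul, norm_pow]
    have h3 : ‖w‖ ^ (2 * j + 1) ≤ 1 := pow_le_one₀ (norm_nonneg w) hw
    nlinarith [norm_nonneg ε, norm_nonneg w, pow_nonneg (norm_nonneg w) (2 * j + 1)]
  have h4 : (0:ℝ) ≤ ‖(1:ℂ) - w ^ (2 * (j + 1))‖ := norm_nonneg _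
  have h5 : (0:ℝ) ≤ ‖(1:ℂ) + ε * w ^ (2 * j + 1)‖ := norm_nonneg _
  nlinarith

lemma P_approx {ε : ℂ} (hε : ‖ε‖ ≤ 1) {w : ℂ} (hw : ‖w‖ ≤ 1 / 2) :
    ‖P ε w - ∏ j ∈ Finset.range 3, term ε j w‖ ≤ 14336 * ‖w‖ ^ 7 := by
  have hw0 := norm_nonneg w
  have hw1 : ‖w‖ < 1 := lt_of_le_of_lt hw (by norm_num)
  have hw7 : ‖w‖ ^ 7 ≤ (1/2 : ℝ) ^ 7 := pow_le_pow_left₀ hw0 hw 7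
  have hsmall : ∀ j : ℕ, 7 * ‖w‖ ^ (2 * (j + 3) + 1) ≤ 1 / 2 := by
    intro j
    have h1 : ‖w‖ ^ (2 * (j + 3) + 1) ≤ ‖w‖ ^ 7 :=
      pow_le_pow_of_le_one hw0 hw1.le (by omega)
    nlinarith
  have hnorms : Summable (fun j : ℕ => ‖Complex.log (term ε (j + 3) w)‖) := by
    refine Summable.of_nonneg_of_le (fun j => norm_nonneg _)
      (fun j => ?_) (((summable_pow_aux hw0 hw1 7).mul_left (21/2 : ℝ)))
    have h1 := norm_log_term_le hε hw1.le (j + 3) (hsmall j)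
    have he : 2 * (j + 3) + 1 = 2 * j + 7 := by ring
    rwa [he] at h1
  set S := ∑' j : ℕ, Complex.log (term ε (j + 3) w) with hS
  have hSnorm : ‖S‖ ≤ 14 * ‖w‖ ^ 7 := by
    have h1 : ‖S‖ ≤ ∑' j : ℕ, ‖Complex.log (term ε (j + 3) w)‖ :=
      norm_tsum_le_tsum_norm hnorms
    have h2 : ∑' j : ℕ, ‖Complex.log (term ε (j + 3) w)‖ ≤
        ∑' j : ℕ, (21 / 2) * ‖w‖ ^ (2 * j + 7) := by
      refine Summable.tsum_le_tsum (fun j => ?_) hnorms (((summable_pow_aux hw0 hw1 7).mul_left _))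
      have h1 := norm_log_term_le hε hw1.le (j + 3) (hsmall j)
      have he : 2 * (j + 3) + 1 = 2 * j + 7 := by ring
      rwa [he] at h1
    have h3 : ∑' j : ℕ, (21 / 2 : ℝ) * ‖w‖ ^ (2 * j + 7) =
        (21 / 2) * (‖w‖ ^ 7 * (1 - ‖w‖ ^ 2)⁻¹) := by
      rw [tsum_mul_left]
      congr 1
      have he : ∀ j : ℕ, ‖w‖ ^ (2 * j + 7) = ‖w‖ ^ 7 * (‖w‖ ^ 2) ^ j := by
        intro j; rw [← pow_mul, ← pow_add]; ring_nf
      simp_rw [he]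
      rw [tsum_mul_left, tsum_geometric_of_lt_one (by positivity) (by nlinarith)]
    have h4 : (1 - ‖w‖ ^ 2)⁻¹ ≤ (3/4 : ℝ)⁻¹ := by
      have hsq : ‖w‖ ^ 2 ≤ 1/4 := by nlinarith
      have h34 : (3/4 : ℝ) ≤ 1 - ‖w‖ ^ 2 := by linarith
      exact inv_anti₀ (by norm_num) h34
    calc ‖S‖ ≤ ∑' j : ℕ, (21 / 2) * ‖w‖ ^ (2 * j + 7) := h1.trans h2
      _ = (21 / 2) * (‖w‖ ^ 7 * (1 - ‖w‖ ^ 2)⁻¹) := h3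
      _ ≤ (21 / 2) * (‖w‖ ^ 7 * (3/4 : ℝ)⁻¹) := by
          gcongr
      _ = 14 * ‖w‖ ^ 7 := by ring
  have hS1 : ‖S‖ ≤ 1 := by nlinarith
  have hexp : ‖Complex.exp S - 1‖ ≤ 2 * ‖S‖ := by
    have := Complex.norm_exp_sub_one_le (x := S) hS1
    simpa using this
  have hQ : ‖∏ j ∈ Finset.range 3, term ε j w‖ ≤ 512 := by
    rw [Finset.prod_range_succ, Finset.prod_range_succ, Finset.prod_range_one,
      norm_mul, norm_mul]
    have h0 := norm_term_le hε hw1.le 0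
    have h1 := norm_term_le hε hw1.le 1
    have h2 := norm_term_le hε hw1.le 2
    have n0 := norm_nonneg (term ε 0 w)
    have n1 := norm_nonneg (term ε 1 w)
    have n2 := norm_nonneg (term ε 2 w)
    have p01 : ‖term ε 0 w‖ * ‖term ε 1 w‖ ≤ 8 * 8 :=
      mul_le_mul h0 h1 n1 (by norm_num)
    have := mul_le_mul p01 h2 n2 (by positivity)
    linarith
  have hsplit := P_split hε hw1 3
  rw [hsplit]
  have e1 : (∏ j ∈ Finset.range 3, term ε j w) * Complex.exp S -
      (∏ j ∈ Finset.range 3, term ε j w) =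
      (∏ j ∈ Finset.range 3, term ε j w) * (Complex.exp S - 1) := by ring
  rw [e1, norm_mul]
  calc ‖∏ j ∈ Finset.range 3, term ε j w‖ * ‖Complex.exp S - 1‖
      ≤ 512 * (2 * (14 * ‖w‖ ^ 7)) := by
        refine mul_le_mul hQ (hexp.trans (by linarith)) (norm_nonneg _) (by norm_num)
    _ = 14336 * ‖w‖ ^ 7 := by ring

/-- Degree ≤ 5 truncation of the partial products. -/
noncomputable def Lpoly (ε : ℂ) (w : ℂ) : ℂ := 1 + 2 * ε * w + 2 * w ^ 4

lemma isBigO_P_sub_L {ε : ℂ} (hε : ‖ε‖ ≤ 1) (H : ℂ → ℂ) (hH : Continuous H)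
    (hid : ∀ w : ℂ, (∏ j ∈ Finset.range 3, term ε j w) - Lpoly ε w = w ^ 6 * H w) :
    (fun w : ℂ => P ε w - Lpoly ε w) =O[𝓝 0] (fun w : ℂ => w ^ 6) := by
  have h1 : (fun w : ℂ => P ε w - ∏ j ∈ Finset.range 3, term ε j w)
      =O[𝓝 0] (fun w : ℂ => w ^ 6) := by
    rw [isBigO_iff]
    refine ⟨14336, ?_⟩
    filter_upwards [Metric.closedBall_mem_nhds (0:ℂ) (by norm_num : (0:ℝ) < 1/2)] with w hw
    rw [Metric.mem_closedBall, dist_zero_right] at hw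
    refine (P_approx hε hw).trans ?_
    rw [norm_pow]
    have : ‖w‖ ^ 7 ≤ ‖w‖ ^ 6 := pow_le_pow_of_le_one (norm_nonneg w)
      (hw.trans (by norm_num)) (by omega)
    nlinarith
  have h2 : (fun w : ℂ => (∏ j ∈ Finset.range 3, term ε j w) - Lpoly ε w)
      =O[𝓝 0] (fun w : ℂ => w ^ 6) := by
    have he : (fun w : ℂ => (∏ j ∈ Finset.range 3, term ε j w) - Lpoly ε w) =
        fun w : ℂ => w ^ 6 * H w := funext hid
    rw [he]
    have := (isBigO_refl (fun w : ℂ => w ^ 6) (𝓝 0)).mul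
      (isBigO_const_of_tendsto (hH.tendsto 0) (one_ne_zero (α := ℂ)))
    simpa using this
  have := h1.add h2
  refine this.congr_left (fun w => by ring)



/-- The function `δ₁` as a function of the half-nome. -/
noncomputable def Phi (w : ℂ) : ℂ := (P (-1) w ^ 4 + P 1 w ^ 4) / 8

/-- Explicit cofactor polynomial for `ε = 1`. -/
def H1 (w : ℂ) : ℂ :=
  -2*w - 3*w^2 + 2*w^3 - 3*w^4 - 4*w^5 - w^6 - 4*w^7 + 2*w^8 - 2*w^10 + 4*w^11 + w^12
    + 4*w^13 + 3*w^14 - 2*w^15 + 3*w^16 + 2*w^17 - 2*w^20 - 2*w^23 - w^24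

/-- Explicit cofactor polynomial for `ε = -1`. -/
def H2 (w : ℂ) : ℂ :=
  2*w - 3*w^2 - 2*w^3 - 3*w^4 + 4*w^5 - w^6 + 4*w^7 + 2*w^8 - 2*w^10 - 4*w^11 + w^12
    - 4*w^13 + 3*w^14 + 2*w^15 + 3*w^16 - 2*w^17 - 2*w^20 + 2*w^23 - w^24

lemma prod3_eq (ε w : ℂ) :
    (∏ j ∈ Finset.range 3, term ε j w) = term ε 0 w * term ε 1 w * term ε 2 w := by
  rw [Finset.prod_range_succ, Finset.prod_range_succ, Finset.prod_range_one]

lemma hid1 : ∀ w : ℂ, (∏ j ∈ Finset.range 3, term 1 j w) - Lpoly 1 w = w ^ 6 * H1 w := by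
  intro w
  rw [prod3_eq]
  simp only [term, Lpoly, H1]
  norm_num
  ring

lemma hid2 : ∀ w : ℂ, (∏ j ∈ Finset.range 3, term (-1) j w) - Lpoly (-1) w = w ^ 6 * H2 w := by
  intro w
  rw [prod3_eq]
  simp only [term, Lpoly, H2]
  norm_num
  ring

lemma P_continuousAt_zero {ε : ℂ} (hε : ‖ε‖ ≤ 1) : ContinuousAt (P ε) 0 :=
  ((P_differentiableOn hε).differentiableAt
    (Metric.isOpen_ball.mem_nhds (Metric.mem_ball_self one_pos))).continuousAt

lemma Phi_asymp :
    (fun w : ℂ => Phi w - (1/4 + 6*w^2 + 6*w^4)) =O[𝓝 0] (fun w : ℂ => w ^ 6) := by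
  have hεm : ‖(-1 : ℂ)‖ ≤ 1 := by simp
  have hH1c : Continuous H1 := by unfold H1; fun_prop
  have hH2c : Continuous H2 := by unfold H2; fun_prop
  have hA := isBigO_P_sub_L (ε := 1) norm_one.le H1 hH1c hid1
  have hB := isBigO_P_sub_L (ε := -1) hεm H2 hH2c hid2
  have hPc1 : ContinuousAt (P 1) 0 := P_continuousAt_zero norm_one.le
  have hPcm : ContinuousAt (P (-1)) 0 := P_continuousAt_zero hεm
  have hL1 : Continuous (Lpoly 1) := by unfold Lpoly; fun_prop
  have hLm : Continuous (Lpoly (-1)) := by unfold Lpoly; fun_prop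
  have hcub1 : ContinuousAt (fun w : ℂ => P 1 w^3 + P 1 w^2 * Lpoly 1 w
      + P 1 w * Lpoly 1 w^2 + Lpoly 1 w^3) 0 :=
    (((hPc1.pow 3).add ((hPc1.pow 2).mul hL1.continuousAt)).add
      (hPc1.mul (hL1.continuousAt.pow 2))).add (hL1.continuousAt.pow 3)
  have hcubm : ContinuousAt (fun w : ℂ => P (-1) w^3 + P (-1) w^2 * Lpoly (-1) w
      + P (-1) w * Lpoly (-1) w^2 + Lpoly (-1) w^3) 0 :=
    (((hPcm.pow 3).add ((hPcm.pow 2).mul hLm.continuousAt)).add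
      (hPcm.mul (hLm.continuousAt.pow 2))).add (hLm.continuousAt.pow 3)
  have h4A : (fun w : ℂ => P 1 w^4 - Lpoly 1 w^4) =O[𝓝 0] (fun w : ℂ => w ^ 6) := by
    have h := hA.mul (Asymptotics.isBigO_const_of_tendsto hcub1.tendsto
      (one_ne_zero (α := ℂ)))
    exact (h.congr (fun w => by ring) (fun w => by ring))
  have h4B : (fun w : ℂ => P (-1) w^4 - Lpoly (-1) w^4) =O[𝓝 0] (fun w : ℂ => w ^ 6) := by
    have h := hB.mul (Asymptotics.isBigO_const_of_tendsto hcubm.tendsto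
      (one_ne_zero (α := ℂ)))
    exact (h.congr (fun w => by ring) (fun w => by ring))
  have hR : (fun w : ℂ => Lpoly 1 w^4 + Lpoly (-1) w^4 - (2 + 48*w^2 + 48*w^4))
      =O[𝓝 0] (fun w : ℂ => w ^ 6) := by
    have hidR : (fun w : ℂ => Lpoly 1 w^4 + Lpoly (-1) w^4 - (2 + 48*w^2 + 48*w^4)) =
        fun w : ℂ => w^6 * (192 + 48*w^2 + 192*w^4 + 64*w^6 + 32*w^10) := by
      funext w; simp only [Lpoly]; ring
    rw [hidR]
    have hRc : Continuous (fun w : ℂ => (192 : ℂ) + 48*w^2 + 192*w^4 + 64*w^6 + 32*w^10) := by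
      fun_prop
    have := (Asymptotics.isBigO_refl (fun w : ℂ => w ^ 6) (𝓝 0)).mul
      (Asymptotics.isBigO_const_of_tendsto (hRc.tendsto 0) (one_ne_zero (α := ℂ)))
    simpa using this
  have hsum := (h4B.add h4A).add hR
  have h8 := hsum.const_mul_left (1/8 : ℂ)
  exact h8.congr_left (fun w => by simp only [Phi]; ring)

end Delta1Aux

open Delta1Aux Filter Topology Asymptotics

lemma qh_sq (τ : ℂ) : qh τ ^ 2 = qq τ := by
  rw [qh, qq, pow_two, ← Complex.exp_add]
  congr 1
  ring

lemma theta3_eq (τ : ℂ) : theta3 τ = P 1 (qh τ) := by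
  rw [theta3, P]
  refine tprod_congr fun j => ?_
  rw [term, ← qh_sq τ]
  ring

lemma theta2_eq (τ : ℂ) : theta2 τ = P (-1) (qh τ) := by
  rw [theta2, P]
  refine tprod_congr fun j => ?_
  rw [term, ← qh_sq τ]
  ring

lemma delta1_eq (τ : ℂ) : delta1 τ = Phi (qh τ) := by
  rw [delta1, Phi, theta2_eq, theta3_eq]

lemma qh_add_one (τ : ℂ) : qh (τ + 1) = -qh τ := by
  rw [qh, qh, mul_add, mul_one, Complex.exp_add, Complex.exp_pi_mul_I]
  ring

lemma P_neg (ε w : ℂ) : P ε (-w) = P (-ε) w := by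
  rw [P, P]
  refine tprod_congr fun j => ?_
  have h1 : (-w) ^ (2 * (j + 1)) = w ^ (2 * (j + 1)) := Even.neg_pow ⟨j + 1, by ring⟩ w
  have h2 : (-w) ^ (2 * j + 1) = -(w ^ (2 * j + 1)) := Odd.neg_pow ⟨j, by ring⟩ w
  rw [term, term, h1, h2]
  ring

lemma delta1_periodic : Function.Periodic delta1 1 := by
  intro τ
  rw [delta1_eq, delta1_eq, qh_add_one, Phi, Phi, P_neg, P_neg]
  norm_num
  ring

lemma norm_qh (τ : ℂ) : ‖qh τ‖ = Real.exp (-π * τ.im) := by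
  rw [qh, Complex.norm_exp]
  congr 1
  simp [Complex.mul_re, Complex.mul_im]

lemma norm_qh_lt_one {τ : ℂ} (h : 0 < τ.im) : ‖qh τ‖ < 1 := by
  rw [norm_qh, ← Real.exp_zero]
  exact Real.exp_lt_exp.mpr (by nlinarith [Real.pi_pos])

lemma qq_eq (τ : ℂ) : qq τ = Function.Periodic.qParam 1 τ := by
  rw [qq, Function.Periodic.qParam]
  congr 1
  push_cast
  ring

lemma qh_eq (τ : ℂ) : qh τ = Function.Periodic.qParam 2 τ := by
  rw [qh, Function.Periodic.qParam]
  congr 1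
  push_cast
  ring

lemma delta1_differentiableAt {z : ℂ} (hz : 0 < z.im) : DifferentiableAt ℂ delta1 z := by
  have hfun : delta1 = fun τ => Phi (qh τ) := funext delta1_eq
  rw [hfun]
  have hqh : DifferentiableAt ℂ qh z := by
    have : Differentiable ℂ qh := by
      unfold qh
      exact (differentiable_id.const_mul _).cexp
    exact this z
  have hball : Metric.ball (0:ℂ) 1 ∈ 𝓝 (qh z) :=
    Metric.isOpen_ball.mem_nhds (mem_ball_zero_iff.mpr (norm_qh_lt_one hz))
  have hP1 : DifferentiableAt ℂ (P 1) (qh z) :=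
    (P_differentiableOn norm_one.le).differentiableAt hball
  have hPm : DifferentiableAt ℂ (P (-1)) (qh z) :=
    (P_differentiableOn (by simp : ‖(-1:ℂ)‖ ≤ 1)).differentiableAt hball
  simp only [Phi]
  exact (((hPm.comp z hqh).pow 4).add ((hP1.comp z hqh).pow 4)).div_const 8

lemma Phi_continuousAt : ContinuousAt Phi 0 := by
  have hP1 : ContinuousAt (P 1) 0 := P_continuousAt_zero norm_one.le
  have hPm : ContinuousAt (P (-1)) 0 := P_continuousAt_zero (by simp)
  exact (((hPm.pow 4).add (hP1.pow 4)).div_const 8)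

/-- The Fourier expansion of `δ₁` in `q = e^{2πiτ}` begins `δ₁ = 1/4 + 6q + 6q² + ⋯`:
`δ₁` is a holomorphic function of `q` on the punctured unit disc extending holomorphically to
`q = 0`, and its Taylor coefficients at `q = 0` in degrees `0`, `1`, `2` are `1/4`, `6`, `6`. -/
theorem delta1_q_expansion :
    ∃ g : ℂ → ℂ, DifferentiableOn ℂ g (Metric.ball (0 : ℂ) 1) ∧
      (∀ τ : ℂ, 0 < τ.im → g (qq τ) = delta1 τ) ∧
      g 0 = 1 / 4 ∧
      iteratedDeriv 1 g 0 / (Nat.factorial 1 : ℂ) = 6 ∧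
      iteratedDeriv 2 g 0 / (Nat.factorial 2 : ℂ) = 6 := by
  set g : ℂ → ℂ := Function.Periodic.cuspFunction 1 delta1 with hgdef
  have hper : Function.Periodic delta1 1 := delta1_periodic
  -- eventual differentiability near i∞
  have hd_evt : ∀ᶠ z in Filter.comap Complex.im Filter.atTop, DifferentiableAt ℂ delta1 z := by
    filter_upwards [Filter.preimage_mem_comap (Filter.Ici_mem_atTop (1:ℝ))] with z hz
    exact delta1_differentiableAt (lt_of_lt_of_le one_pos hz)
  -- boundedness at i∞
  have hqt : Filter.Tendsto qh (Filter.comap Complex.im Filter.atTop) (𝓝 0) := by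
    have : qh = fun τ => Function.Periodic.qParam 2 τ := funext qh_eq
    rw [this]
    exact (Function.Periodic.qParam_tendsto two_pos).mono_right nhdsWithin_le_nhds
  have hbd : Filter.BoundedAtFilter (Filter.comap Complex.im Filter.atTop) delta1 := by
    have hfun : delta1 = fun τ => Phi (qh τ) := funext delta1_eq
    have ht : Filter.Tendsto delta1 (Filter.comap Complex.im Filter.atTop) (𝓝 (Phi 0)) := by
      rw [hfun]; exact Phi_continuousAt.tendsto.comp hqt
    exact Asymptotics.isBigO_const_of_tendsto ht (one_ne_zero (α := ℝ))
  -- differentiability of g on the unit ball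
  have hdiffg : DifferentiableOn ℂ g (Metric.ball (0:ℂ) 1) := by
    intro q hq
    rw [mem_ball_zero_iff] at hq
    rcases eq_or_ne q 0 with rfl | hq0
    · exact (Function.Periodic.differentiableAt_cuspFunction_zero one_pos hper hd_evt
        hbd).differentiableWithinAt
    · have him : 0 < (Function.Periodic.invQParam 1 q).im :=
        Function.Periodic.im_invQParam_pos_of_norm_lt_one one_pos
          hq hq0
      have h := Function.Periodic.differentiableAt_cuspFunction one_ne_zero hper
        (delta1_differentiableAt him)
      rw [Function.Periodic.qParam_right_inv one_ne_zero hq0] at h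
      exact h.differentiableWithinAt
  -- the functional equation
  have hfeq : ∀ τ : ℂ, g (qq τ) = delta1 τ := by
    intro τ
    rw [qq_eq]
    exact Function.Periodic.eq_cuspFunction one_ne_zero hper τ
  -- power series of g at 0
  have hganal : AnalyticAt ℂ g 0 := hdiffg.analyticAt (Metric.ball_mem_nhds 0 one_pos)
  obtain ⟨p, hp⟩ := hganal
  -- the key asymptotic bound
  obtain ⟨C, hC0⟩ := Phi_asymp.bound
  rw [Metric.eventually_nhds_iff] at hC0
  obtain ⟨δ, hδpos, hC⟩ := hC0
  have hqb : ∀ᶠ q in 𝓝[≠] (0:ℂ), ‖g q - (1/4 + 6*q + 6*q^2)‖ ≤ C * ‖q‖^3 := by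
    have hball : Metric.ball (0:ℂ) (min (δ^2) 1) ∈ 𝓝 (0:ℂ) :=
      Metric.ball_mem_nhds _ (lt_min (by positivity) one_pos)
    filter_upwards [mem_nhdsWithin_of_mem_nhds hball, self_mem_nhdsWithin] with q hq1 hq2
    have hq0 : q ≠ 0 := hq2
    rw [mem_ball_zero_iff] at hq1
    have hq1' : ‖q‖ < 1 := lt_of_lt_of_le hq1 (min_le_right _ _)
    have hqδ : ‖q‖ < δ^2 := lt_of_lt_of_le hq1 (min_le_left _ _)
    set τ := Function.Periodic.invQParam 1 q with hτdef
    have him : 0 < τ.im :=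
      Function.Periodic.im_invQParam_pos_of_norm_lt_one one_pos
        hq1' hq0
    have hqτ : qq τ = q := by
      rw [qq_eq]
      exact Function.Periodic.qParam_right_inv one_ne_zero hq0
    have hw2 : qh τ ^ 2 = q := by rw [qh_sq]; exact hqτ
    have hnw : ‖qh τ‖^2 = ‖q‖ := by rw [← norm_pow, hw2]
    have hwδ : ‖qh τ‖ < δ := by nlinarith [norm_nonneg (qh τ)]
    have hgq : g q = Phi (qh τ) := by
      rw [← hqτ, hfeq τ, delta1_eq]
    have harg : g q - (1/4 + 6*q + 6*q^2) =
        Phi (qh τ) - (1/4 + 6*(qh τ)^2 + 6*(qh τ)^4) := by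
      rw [hgq, ← hw2]; ring
    have hCq := hC (y := qh τ) (by rwa [dist_zero_right])
    rw [harg]
    refine hCq.trans ?_
    rw [norm_pow, ← hnw]
    ring_nf
    exact le_refl _
  -- auxiliary limit facts
  have hmaj : ∀ k : ℕ, Filter.Tendsto (fun q : ℂ => C * ‖q‖^k) (𝓝[≠] 0) (𝓝 (C * ‖(0:ℂ)‖^k)) := by
    intro k
    exact ((continuous_const.mul ((continuous_norm).pow k)).tendsto 0).mono_left
      nhdsWithin_le_nhds
  -- limit of g at 0
  have l0 : Filter.Tendsto g (𝓝[≠] (0:ℂ)) (𝓝 (1/4)) := by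
    have herr : Filter.Tendsto (fun q : ℂ => g q - (1/4 + 6*q + 6*q^2)) (𝓝[≠] (0:ℂ)) (𝓝 0) := by
      refine squeeze_zero_norm' hqb ?_
      have := hmaj 3
      simpa using this
    have hF0 : Filter.Tendsto (fun q : ℂ => 1/4 + 6*q + 6*q^2) (𝓝[≠] (0:ℂ)) (𝓝 (1/4)) := by
      have hc : Continuous (fun q : ℂ => 1/4 + 6*q + 6*q^2) := by fun_prop
      have := (hc.tendsto 0).mono_left (nhdsWithin_le_nhds (s := {(0:ℂ)}ᶜ))
      simpa using this
    have := hF0.add herr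
    have hfe : (fun q : ℂ => (1/4 + 6*q + 6*q^2) + (g q - (1/4 + 6*q + 6*q^2))) = g :=
      funext fun q => by ring
    rw [hfe] at this
    simpa using this
  have hg0 : g 0 = 1/4 :=
    tendsto_nhds_unique ((hp.continuousAt.tendsto).mono_left nhdsWithin_le_nhds) l0
  -- first dslope
  have hp1 : HasFPowerSeriesAt (dslope g 0) p.fslope 0 := hp.has_fpower_series_dslope_fslope
  have hd1 : ∀ q : ℂ, q ≠ 0 → dslope g 0 q = (g q - 1/4)/q := by
    intro q hq0
    rw [dslope_of_ne _ hq0, slope_def_field, hg0, sub_zero]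
  have hqb1 : ∀ᶠ q in 𝓝[≠] (0:ℂ), ‖dslope g 0 q - (6 + 6*q)‖ ≤ C * ‖q‖^2 := by
    filter_upwards [hqb, self_mem_nhdsWithin] with q hq hq2
    have hq0 : q ≠ 0 := hq2
    have hqn : (0:ℝ) < ‖q‖ := norm_pos_iff.mpr hq0
    have harg : dslope g 0 q - (6 + 6*q) = (g q - (1/4 + 6*q + 6*q^2))/q := by
      rw [hd1 q hq0]
      field_simp
      ring
    rw [harg, norm_div]
    rw [div_le_iff₀ hqn]
    calc ‖g q - (1/4 + 6*q + 6*q^2)‖ ≤ C * ‖q‖^3 := hq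
      _ = C * ‖q‖^2 * ‖q‖ := by ring
  have l1 : Filter.Tendsto (dslope g 0) (𝓝[≠] (0:ℂ)) (𝓝 6) := by
    have herr : Filter.Tendsto (fun q : ℂ => dslope g 0 q - (6 + 6*q)) (𝓝[≠] (0:ℂ)) (𝓝 0) := by
      refine squeeze_zero_norm' hqb1 ?_
      have := hmaj 2
      simpa using this
    have hF0 : Filter.Tendsto (fun q : ℂ => 6 + 6*q) (𝓝[≠] (0:ℂ)) (𝓝 6) := by
      have hc : Continuous (fun q : ℂ => 6 + 6*q) := by fun_prop
      have := (hc.tendsto 0).mono_left (nhdsWithin_le_nhds (s := {(0:ℂ)}ᶜ))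
      simpa using this
    have := hF0.add herr
    have hfe : (fun q : ℂ => (6 + 6*q) + (dslope g 0 q - (6 + 6*q))) = dslope g 0 :=
      funext fun q => by ring
    rw [hfe] at this
    simpa using this
  have hg1 : dslope g 0 0 = 6 :=
    tendsto_nhds_unique ((hp1.continuousAt.tendsto).mono_left nhdsWithin_le_nhds) l1
  -- second dslope
  have hp2 : HasFPowerSeriesAt (dslope (dslope g 0) 0) p.fslope.fslope 0 :=
    hp1.has_fpower_series_dslope_fslope
  have hqb2 : ∀ᶠ q in 𝓝[≠] (0:ℂ), ‖dslope (dslope g 0) 0 q - 6‖ ≤ C * ‖q‖ := by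
    filter_upwards [hqb, self_mem_nhdsWithin] with q hq hq2
    have hq0 : q ≠ 0 := hq2
    have hqn : (0:ℝ) < ‖q‖ := norm_pos_iff.mpr hq0
    have hd2 : dslope (dslope g 0) 0 q = (dslope g 0 q - 6)/q := by
      rw [dslope_of_ne _ hq0, slope_def_field, hg1, sub_zero]
    have harg : dslope (dslope g 0) 0 q - 6 = (g q - (1/4 + 6*q + 6*q^2))/q^2 := by
      rw [hd2, hd1 q hq0]
      field_simp
      ring
    rw [harg, norm_div, norm_pow]
    rw [div_le_iff₀ (by positivity)]
    calc ‖g q - (1/4 + 6*q + 6*q^2)‖ ≤ C * ‖q‖^3 := hq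
      _ = C * ‖q‖ * ‖q‖^2 := by ring
  have l2 : Filter.Tendsto (dslope (dslope g 0) 0) (𝓝[≠] (0:ℂ)) (𝓝 6) := by
    have herr : Filter.Tendsto (fun q : ℂ => dslope (dslope g 0) 0 q - 6) (𝓝[≠] (0:ℂ))
        (𝓝 0) := by
      refine squeeze_zero_norm' hqb2 ?_
      have := hmaj 1
      simpa using this
    have := herr.add (tendsto_const_nhds (α := ℂ) (x := (6:ℂ)) (f := 𝓝[≠] (0:ℂ)))
    have hfe : (fun q : ℂ => (dslope (dslope g 0) 0 q - 6) + 6) = dslope (dslope g 0) 0 :=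
      funext fun q => by ring
    rw [hfe] at this
    simpa using this
  have hg2 : dslope (dslope g 0) 0 0 = 6 :=
    tendsto_nhds_unique ((hp2.continuousAt.tendsto).mono_left nhdsWithin_le_nhds) l2
  -- coefficients
  have coeff1 : p.coeff 1 = 6 := by
    have h0 : p.fslope.coeff 0 = dslope g 0 0 := hp1.coeff_zero 1
    rw [← FormalMultilinearSeries.coeff_fslope, h0, hg1]
  have coeff2 : p.coeff 2 = 6 := by
    have h0 : p.fslope.fslope.coeff 0 = dslope (dslope g 0) 0 0 := hp2.coeff_zero 1
    have : p.coeff 2 = p.fslope.fslope.coeff 0 := by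
      rw [FormalMultilinearSeries.coeff_fslope, FormalMultilinearSeries.coeff_fslope]
    rw [this, h0, hg2]
  -- iterated derivatives from the power series
  obtain ⟨r, hpr⟩ := hp
  have hiter : ∀ n : ℕ, iteratedDeriv n g 0 = (n.factorial : ℕ) • p.coeff n := by
    intro n
    rw [iteratedDeriv_eq_iteratedFDeriv]
    exact (hpr.factorial_smul (y := (1:ℂ)) n).symm
  refine ⟨g, hdiffg, fun τ _ => hfeq τ, hg0, ?_, ?_⟩
  · rw [hiter 1, coeff1]
    simp
  · rw [hiter 2, coeff2]
    norm_num [nsmul_eq_mul, Nat.factorial]
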